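/- Let X ⊂ ℝⁿ be an open set containing the closed ball of radius r > 0 centered at 0. Let u : X → ℝ be convex with u ≥ 0 and u(0) = 0, suppose u is differentiable at the point r e₁, and suppose h := sup_{‖x‖ ≤ r} u(x) is positive and attained at r e₁, i.e. h = u(r e₁). Define σ(x) := (h/(2r)) (x¹ + r), where x¹ = ⟨x, e₁⟩. Then the set S := {x ∈ X : u(x) < σ(x)} is contained in the slab {x : −r ≤ x¹ ≤ r}. -/

import Mathlib

open MeasureTheory RealInnerProductSpace

noncomputable section

/-- Supporting inequality for a convex function at a point of differentiability. -/
lemma support_ineq_aux {E : Type*} [NormedAddCommGroup E] [NormedSpace ℝ E]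
    {X : Set E} {u : E → ℝ} (hu : ConvexOn ℝ X u)
    {a b : E} (ha : a ∈ X) (hb : b ∈ X)
    {g : E →L[ℝ] ℝ} (hg : HasFDerivAt u g a) :
    u a + g (b - a) ≤ u b := by
  set m : ℝ →ᵃ[ℝ] E := AffineMap.lineMap a b with hm
  have hψ : ConvexOn ℝ (m ⁻¹' X) (u ∘ m) := hu.comp_affineMap m
  have h0 : (0 : ℝ) ∈ m ⁻¹' X := by
    simp only [Set.mem_preimage, hm, AffineMap.lineMap_apply_zero]; exact ha
  have h1 : (1 : ℝ) ∈ m ⁻¹' X := by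
    simp only [Set.mem_preimage, hm, AffineMap.lineMap_apply_one]; exact hb
  have hmfun : (fun s : ℝ => m s) = fun s : ℝ => s • (b - a) + a := by
    funext s
    simp [hm, AffineMap.lineMap_apply_module']
  have hcurve : HasDerivAt (fun s : ℝ => m s) (b - a) 0 := by
    rw [hmfun]
    simpa using ((hasDerivAt_id (0 : ℝ)).smul_const (b - a)).add_const a
  have hd : HasDerivAt (u ∘ m) (g (b - a)) 0 :=
    hg.comp_hasDerivAt_of_eq 0 hcurve (by simp [hm])
  have hslope := hψ.le_slope_of_hasDerivAt h0 h1 one_pos hd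
  have : slope (u ∘ m) 0 1 = u b - u a := by
    simp [slope_def_field, hm, Function.comp]
  rw [this] at hslope
  linarith

set_option maxHeartbeats 1000000 in
/-- **Slab containment.** If `u ≥ 0` is convex on an open set `X ⊇ closedBall 0 r`,
`u 0 = 0`, `u` is differentiable at `r e₁`, and `h := sup_{‖x‖ ≤ r} u > 0` is attained
at `r e₁`, then the section `S = {u < σ}` cut off by `σ(x) = (h/2r)(x¹ + r)` lies in
the slab `{|x¹| ≤ r}`. -/
theorem slab_containment {n : ℕ} (hn : 1 ≤ n)
    (X : Set (EuclideanSpace ℝ (Fin n))) (hXopen : IsOpen X)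
    (r : ℝ) (hr : 0 < r) (hball : Metric.closedBall 0 r ⊆ X)
    (u : EuclideanSpace ℝ (Fin n) → ℝ)
    (hu_convex : ConvexOn ℝ X u)
    (hu_nonneg : ∀ x ∈ X, 0 ≤ u x)
    (hu0 : u 0 = 0)
    (e₁ : EuclideanSpace ℝ (Fin n)) (he₁ : e₁ = EuclideanSpace.single ⟨0, hn⟩ 1)
    (hdiff : DifferentiableAt ℝ u (r • e₁))
    (h : ℝ) (hh : h = sSup (u '' Metric.closedBall 0 r)) (hhpos : 0 < h)
    (hattained : h = u (r • e₁))
    (σ : EuclideanSpace ℝ (Fin n) → ℝ)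
    (hσ : ∀ x, σ x = h / (2 * r) * (⟪x, e₁⟫ + r)) :
    {x ∈ X | u x < σ x} ⊆ {x | |⟪x, e₁⟫| ≤ r} := by
  have hne₁ : ‖e₁‖ = 1 := by simp [he₁]
  have hre₁ball : r • e₁ ∈ Metric.closedBall (0 : EuclideanSpace ℝ (Fin n)) r := by
    simp [norm_smul, hne₁, abs_of_pos hr]
  have hre₁X : r • e₁ ∈ X := hball hre₁ball
  have h0X : (0 : EuclideanSpace ℝ (Fin n)) ∈ X := hball (by simp [hr.le])
  set g := fderiv ℝ u (r • e₁) with hgdef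
  have hg : HasFDerivAt u g (r • e₁) := hdiff.hasFDerivAt
  -- continuity and boundedness on the closed ball
  have hucont : ContinuousOn u X := hu_convex.continuousOn hXopen
  have hbdd : BddAbove (u '' Metric.closedBall 0 r) :=
    (isCompact_closedBall 0 r).bddAbove_image (hucont.mono hball)
  have hub : ∀ y ∈ Metric.closedBall (0 : EuclideanSpace ℝ (Fin n)) r, u y ≤ h := by
    intro y hy
    rw [hh]
    exact le_csSup hbdd ⟨y, hy, rfl⟩
  -- supporting inequality at r • e₁
  have key : ∀ b ∈ X, u (r • e₁) + g (b - r • e₁) ≤ u b := fun b hb =>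
    support_ineq_aux hu_convex hre₁X hb hg
  -- Fact 1 : h ≤ r * g e₁
  have fact1 : h ≤ r * g e₁ := by
    have := key 0 h0X
    rw [hu0, ← hattained] at this
    have hgs : g (0 - r • e₁) = -(r * g e₁) := by
      rw [zero_sub, map_neg, ContinuousLinearMap.map_smul]
      simp
    rw [hgs] at this
    linarith
  -- Fact 2 : tangential derivatives vanish
  have fact2 : ∀ w : EuclideanSpace ℝ (Fin n), ⟪e₁, w⟫ = 0 → g w = 0 := by
    intro w hw
    rcases eq_or_ne w 0 with rfl | hw0
    · simp
    set v : EuclideanSpace ℝ (Fin n) := ‖w‖⁻¹ • w with hv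
    have hvn : ‖v‖ = 1 := norm_smul_inv_norm hw0
    have hev : ⟪e₁, v⟫ = 0 := by
      rw [hv, real_inner_smul_right, hw, mul_zero]
    set p : ℝ → EuclideanSpace ℝ (Fin n) :=
      fun θ => (r * Real.cos θ) • e₁ + (r * Real.sin θ) • v with hp
    have hpball : ∀ θ, p θ ∈ Metric.closedBall (0 : EuclideanSpace ℝ (Fin n)) r := by
      intro θ
      have hsq : ‖p θ‖ ^ 2 = r ^ 2 := by
        rw [hp]
        rw [norm_add_sq_real]
        rw [real_inner_smul_left, real_inner_smul_right, hev]
        rw [norm_smul, norm_smul, hvn, hne₁]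
        have := Real.sin_sq_add_cos_sq θ
        simp only [Real.norm_eq_abs, mul_one]
        rw [sq_abs, sq_abs]
        nlinarith
      have hn0 : (0:ℝ) ≤ ‖p θ‖ := norm_nonneg _
      simp only [Metric.mem_closedBall, dist_zero_right]
      nlinarith
    have hp0 : p 0 = r • e₁ := by simp [hp]
    have hmax : IsLocalMax (fun θ => u (p θ)) 0 := by
      apply Filter.Eventually.of_forall
      intro θ
      simp only [hp0]
      rw [← hattained]
      exact hub _ (hpball θ)
    have hcurve : HasDerivAt p (r • v) 0 := by
      have h1 : HasDerivAt (fun θ : ℝ => (r * Real.cos θ) • e₁)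
          ((r * -Real.sin 0) • e₁) 0 :=
        ((Real.hasDerivAt_cos 0).const_mul r).smul_const e₁
      have h2 : HasDerivAt (fun θ : ℝ => (r * Real.sin θ) • v)
          ((r * Real.cos 0) • v) 0 :=
        ((Real.hasDerivAt_sin 0).const_mul r).smul_const v
      have := h1.add h2
      simp only [Real.sin_zero, Real.cos_zero, mul_zero, neg_zero, zero_smul, mul_one, zero_add] at this
      exact this
    have hd : HasDerivAt (fun θ => u (p θ)) (g (r • v)) 0 :=
      hg.comp_hasDerivAt_of_eq 0 hcurve hp0.symm
    have hzero : g (r • v) = 0 := hmax.hasDerivAt_eq_zero hd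
    have hgv : g v = 0 := by
      rw [ContinuousLinearMap.map_smul] at hzero
      simpa [hr.ne'] using hzero
    have hwv : w = ‖w‖ • v := by
      rw [hv, smul_smul, mul_inv_cancel₀ (norm_ne_zero_iff.mpr hw0), one_smul]
    rw [hwv, ContinuousLinearMap.map_smul, hgv]
    simp
  -- main argument
  intro x hx
  obtain ⟨hxX, hxσ⟩ := hx
  set t : ℝ := ⟪x, e₁⟫ with ht
  simp only [Set.mem_setOf_eq, ← ht]
  rw [abs_le]
  constructor
  · -- lower bound
    by_contra hcon
    push_neg at hcon
    have hσneg : σ x < 0 := by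
      rw [hσ x, ← ht]
      have : t + r < 0 := by linarith
      have hpos : 0 < h / (2 * r) := by positivity
      nlinarith
    exact absurd (lt_of_le_of_lt (hu_nonneg x hxX) (lt_trans hxσ hσneg)) (lt_irrefl 0)
  · -- upper bound
    by_contra hcon
    push_neg at hcon
    -- decompose x - r • e₁
    have hinner_sym : ⟪e₁, x⟫ = t := by rw [ht, real_inner_comm]
    have hee : ⟪e₁, e₁⟫ = (1:ℝ) := by
      rw [real_inner_self_eq_norm_sq, hne₁]; norm_num
    have hw : ⟪e₁, x - t • e₁⟫ = 0 := by
      rw [inner_sub_right, real_inner_smul_right, hinner_sym, hee, mul_one, sub_self]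
    have hdecomp : x - r • e₁ = (x - t • e₁) + (t - r) • e₁ := by
      rw [sub_smul]; abel
    have hgx : g (x - r • e₁) = (t - r) * g e₁ := by
      rw [hdecomp, map_add, fact2 _ hw, ContinuousLinearMap.map_smul, zero_add]
      simp
    have hsupport := key x hxX
    rw [← hattained, hgx] at hsupport
    -- so u x ≥ h + (t - r) * g e₁ ≥ h + (t-r) * h / r
    have hge : h + (t - r) * (h / r) ≤ u x := by
      have h1 : h / r ≤ g e₁ := by
        rw [div_le_iff₀ hr]; linarith [fact1]
      have h2 : (t - r) * (h / r) ≤ (t - r) * g e₁ := by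
        apply mul_le_mul_of_nonneg_left h1 (by linarith)
      linarith
    have hσx : σ x = h / (2 * r) * (t + r) := by rw [hσ x]
    rw [hσx] at hxσ
    have hrne : r ≠ 0 := hr.ne'
    have e1 : h + (t - r) * (h / r) = h + (t - r) * h / r := by ring
    have e2 : h / (2 * r) * (t + r) = h + (t - r) * h / (2 * r) := by
      field_simp; ring
    rw [e2] at hxσ
    rw [e1] at hge
    have : (t - r) * h / (2 * r) < (t - r) * h / r := by
      rw [div_lt_div_iff₀ (by positivity) hr]
      nlinarith [mul_pos (sub_pos.mpr hcon) hhpos]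
    linarith

end
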